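/- For every natural number n, one has (n+1)! · C_n = ∏_{j=1}^{n} (4j − 2), i.e., the n-th Catalan number equals the product 2·6·10···(4n−2) divided by (n+1)!. (Euler's product formula, 1751.) -/

import Mathlib

lemma fact_mul_prod (n : ℕ) :
    Nat.factorial n * ∏ j ∈ Finset.Icc 1 n, (4 * j - 2) = Nat.factorial (2 * n) := by
  induction n with
  | zero => simp
  | succ n ih =>
    rw [Finset.prod_Icc_succ_top (by omega), Nat.factorial_succ]
    have h2 : 2 * (n + 1) = (2 * n + 1) + 1 := by ring
    rw [h2, Nat.factorial_succ, Nat.factorial_succ, ← ih]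
    have : 4 * (n + 1) - 2 = 4 * n + 2 := by omega
    rw [this]; ring

/-- Euler's product formula (1751): `(n+1)! · Cₙ = ∏_{j=1}^{n} (4j − 2)`. -/
theorem catalan_euler_product (n : ℕ) :
    Nat.factorial (n + 1) * catalan n = ∏ j ∈ Finset.Icc 1 n, (4 * j - 2) := by
  have hpos := Nat.factorial_pos n
  apply Nat.eq_of_mul_eq_mul_left hpos
  rw [fact_mul_prod]
  have h1 : Nat.factorial (n + 1) = (n + 1) * Nat.factorial n := Nat.factorial_succ n
  have h2 := succ_mul_catalan_eq_centralBinom n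
  have h3 := Nat.choose_mul_factorial_mul_factorial (Nat.le_mul_of_pos_left n (by norm_num) : n ≤ 2 * n)
  have h4 : 2 * n - n = n := by omega
  rw [h4] at h3
  calc Nat.factorial n * (Nat.factorial (n + 1) * catalan n)
      = Nat.centralBinom n * Nat.factorial n * Nat.factorial n := by
        rw [h1]; rw [← h2]; ring
    _ = Nat.factorial (2 * n) := by rw [Nat.centralBinom, h3]
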